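/- For all integers p ≥ 3 and r ≥ 3, C(2p−1, r) ≥ 2·C(p−1, r−1) + C(p−1, r−2) + (2p−4)·C(p−1, r−1). -/

import Mathlib

theorem stmt_13 (p r : ℕ) (hp : 3 ≤ p) (hr : 3 ≤ r) :
    2 * Nat.choose (p - 1) (r - 1) + Nat.choose (p - 1) (r - 2)
      + (2 * p - 4) * Nat.choose (p - 1) (r - 1) ≤ Nat.choose (2 * p - 1) r := by
  obtain ⟨q, rfl⟩ : ∃ q, p = q + 3 := ⟨p - 3, by omega⟩
  obtain ⟨s, rfl⟩ : ∃ s, r = s + 3 := ⟨r - 3, by omega⟩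
  have e1 : q + 3 - 1 = q + 2 := by omega
  have e2 : s + 3 - 1 = s + 2 := by omega
  have e3 : s + 3 - 2 = s + 1 := by omega
  have e4 : 2 * (q + 3) - 4 = 2 * q + 2 := by omega
  have e5 : 2 * (q + 3) - 1 = (q + 3) + (q + 2) := by omega
  rw [e1, e2, e3, e4, e5]
  set A := Nat.choose (q + 2) (s + 2) with hA
  set B := Nat.choose (q + 2) (s + 1) with hB
  have key : A * (s + 2) = B * (q + 2 - (s + 1)) := Nat.choose_succ_right_eq (q + 2) (s + 1)
  have h1 : 2 * A ≤ B * (q + 1) := by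
    calc 2 * A ≤ (s + 2) * A := Nat.mul_le_mul_right _ (by omega)
      _ = A * (s + 2) := Nat.mul_comm _ _
      _ = B * (q + 2 - (s + 1)) := key
      _ ≤ B * (q + 1) := Nat.mul_le_mul_left _ (by omega)
  have hev : 2 ∣ (q + 3) * (q + 3 - 1) := by
    rw [e1, Nat.mul_comm]
    exact (Nat.even_mul_succ_self (q + 2)).two_dvd
  have hC2 : 2 * Nat.choose (q + 3) 2 = (q + 3) * (q + 2) := by
    rw [Nat.choose_two_right, Nat.mul_div_cancel' hev, e1]
  have hvdme := Nat.add_choose_eq (q + 3) (q + 2) (s + 3)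
  have hvdm : (q + 3) * A + Nat.choose (q + 3) 2 * B
      ≤ Nat.choose ((q + 3) + (q + 2)) (s + 3) := by
    rw [hvdme]
    have hsub : ({(1, s + 2), (2, s + 1)} : Finset (ℕ × ℕ)) ⊆ Finset.HasAntidiagonal.antidiagonal (s + 3) := by
      intro x hx
      simp only [Finset.mem_insert, Finset.mem_singleton] at hx
      rcases hx with h | h <;> subst h <;> simp [Finset.HasAntidiagonal.mem_antidiagonal] <;> omega
    calc (q + 3) * A + Nat.choose (q + 3) 2 * B
        = ∑ ij ∈ ({(1, s + 2), (2, s + 1)} : Finset (ℕ × ℕ)),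
            Nat.choose (q + 3) ij.1 * Nat.choose (q + 2) ij.2 := by
          rw [Finset.sum_pair (by simp)]
          simp [hA, hB, Nat.choose_one_right]
      _ ≤ _ := Finset.sum_le_sum_of_subset hsub
  refine le_trans ?_ hvdm
  nlinarith [h1, hC2, Nat.zero_le A, Nat.zero_le B]
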